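/- Let R ⊆ ℂ be a subring containing infinitely many divisors of 2, i.e. the set { t ∈ R : t ≠ 0 and 2/t ∈ R } is infinite. Then for each n ≥ 1 there are infinitely many frieze patterns of height n over R \ {0}; precisely, the set of restrictions to the band B_n = {(i,j) ∈ ℤ² : i ≤ j ≤ i+n+3} of frieze patterns of height n over R \ {0} is an infinite set. -/

import Mathlib

/-- A frieze pattern of height `n` over a subset `S ⊆ ℂ`. -/
def IsFrieze (n : ℕ) (S : Set ℂ) (c : ℤ × ℤ → ℂ) : Prop :=
  (∀ i : ℤ, c (i, i) = 0) ∧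
  (∀ i : ℤ, c (i, i + 1) = 1) ∧
  (∀ i : ℤ, c (i, i + n + 2) = 1) ∧
  (∀ i : ℤ, c (i, i + n + 3) = 0) ∧
  (∀ i j : ℤ, i + 2 ≤ j → j ≤ i + n + 1 → c (i, j) ∈ S) ∧
  (∀ i j : ℤ, i + 1 ≤ j → j ≤ i + n + 2 →
    c (i, j) * c (i + 1, j + 1) - c (i, j + 1) * c (i + 1, j) = 1)



noncomputable section FrzAux

/-- determinant of two vectors in ℂ² -/
def frzDet (a b : ℂ × ℂ) : ℂ := a.1 * b.2 - a.2 * b.1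

/-- sign (-1)^q -/
def frzSgn (q : ℤ) : ℂ := if q % 2 = 0 then 1 else -1

lemma frzSgn_cases (q : ℤ) : frzSgn q = 1 ∨ frzSgn q = -1 := by
  unfold frzSgn; split <;> simp

lemma frzSgn_succ (q : ℤ) : frzSgn (q + 1) = - frzSgn q := by
  unfold frzSgn
  rcases Int.emod_two_eq q with h | h
  · have h1 : ¬((q + 1) % 2 = 0) := by omega
    rw [if_pos h, if_neg h1]
  · have h1 : (q + 1) % 2 = 0 := by omega
    have h2 : ¬(q % 2 = 0) := by omega
    rw [if_neg h2, if_pos h1]; ring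

/-- base vectors indexed by residue in [0, n+2] -/
def frzBase (n : ℕ) (t : ℂ) (r : ℤ) : ℂ × ℂ :=
  if r = 0 then (1, 0)
  else if r = 1 then (0, 1)
  else if r = (n : ℤ) + 2 then (-(2 / t), 1)
  else (-1, t + (((n : ℤ) + 1 - r : ℤ) : ℂ))

/-- the infinite antiperiodic sequence of vectors -/
def frzV (n : ℕ) (t : ℂ) (k : ℤ) : ℂ × ℂ :=
  frzSgn (k / ((n : ℤ) + 3)) • frzBase n t (k % ((n : ℤ) + 3))

/-- the candidate frieze -/
def frzC (n : ℕ) (t : ℂ) (p : ℤ × ℤ) : ℂ := frzDet (frzV n t p.1) (frzV n t p.2)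

lemma frzDet_smul (x y : ℂ) (a b : ℂ × ℂ) :
    frzDet (x • a) (y • b) = x * y * frzDet a b := by
  simp only [frzDet, Prod.smul_fst, Prod.smul_snd, smul_eq_mul]; ring

lemma frzDet_antisym (a b : ℂ × ℂ) : frzDet a b = - frzDet b a := by
  simp only [frzDet]; ring

lemma div_mod_spec (m q r k : ℤ) (hm : 0 < m) (h : k = r + q * m) (h0 : 0 ≤ r) (h1 : r < m) :
    k / m = q ∧ k % m = r := by
  constructor
  · rw [h, Int.add_mul_ediv_right _ _ (ne_of_gt hm), Int.ediv_eq_zero_of_lt h0 h1, zero_add]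
  · rw [h, Int.add_mul_emod_self_right, Int.emod_eq_of_lt h0 h1]

end FrzAux

noncomputable section FrzAux2
open Complex

lemma frzSgn_mul_self (q : ℤ) : frzSgn q * frzSgn q = 1 := by
  rcases frzSgn_cases q with h | h <;> rw [h] <;> norm_num

lemma frzBase_zero (n : ℕ) (t : ℂ) : frzBase n t 0 = (1, 0) := by simp [frzBase]

lemma frzBase_one (n : ℕ) (t : ℂ) : frzBase n t 1 = (0, 1) := by
  have h1 : (1 : ℤ) ≠ 0 := by omega
  rw [frzBase, if_neg h1, if_pos rfl]

lemma frzBase_last (n : ℕ) (t : ℂ) : frzBase n t ((n : ℤ) + 2) = (-(2 / t), 1) := by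
  have h1 : (n : ℤ) + 2 ≠ 0 := by omega
  have h2 : (n : ℤ) + 2 ≠ 1 := by omega
  rw [frzBase, if_neg h1, if_neg h2, if_pos rfl]

lemma frzBase_mid (n : ℕ) (t : ℂ) (r : ℤ) (h2 : 2 ≤ r) (hr : r ≤ (n : ℤ) + 1) :
    frzBase n t r = (-1, t + (((n : ℤ) + 1 - r : ℤ) : ℂ)) := by
  have h1 : r ≠ 0 := by omega
  have h1' : r ≠ 1 := by omega
  have h3 : r ≠ (n : ℤ) + 2 := by omega
  rw [frzBase, if_neg h1, if_neg h1', if_neg h3]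

lemma frz_consec (n : ℕ) (hn : 1 ≤ n) (t : ℂ) (ht : t ≠ 0) (k : ℤ) :
    frzDet (frzV n t k) (frzV n t (k + 1)) = 1 := by
  set m : ℤ := (n : ℤ) + 3 with hm_def
  have hm : 0 < m := by omega
  have hr0 : 0 ≤ k % m := Int.emod_nonneg k (ne_of_gt hm)
  have hrm : k % m < m := Int.emod_lt_of_pos k hm
  have hk : k = k % m + (k / m) * m := by
    have h := Int.mul_ediv_add_emod k m
    have h2 := mul_comm m (k / m)
    linarith
  by_cases hcase : k % m = m - 1
  · -- wrap around
    have hspec : (k + 1) / m = k / m + 1 ∧ (k + 1) % m = 0 :=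
      div_mod_spec m (k / m + 1) 0 (k + 1) hm (by linarith [hk, hcase]) le_rfl hm
    have hlast : k % m = (n : ℤ) + 2 := by omega
    rw [frzV, frzV, hspec.1, hspec.2, hlast, frzSgn_succ, frzBase_zero, frzBase_last,
      frzDet_smul]
    have : frzSgn (k / m) * -frzSgn (k / m) = -1 := by
      have := frzSgn_mul_self (k / m); ring_nf; ring_nf at this; linear_combination -this
    rw [this]
    simp [frzDet]
  · -- same block
    have hspec : (k + 1) / m = k / m ∧ (k + 1) % m = k % m + 1 :=
      div_mod_spec m (k / m) (k % m + 1) (k + 1) hm (by linarith) (by omega) (by omega)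
    rw [frzV, frzV, hspec.1, hspec.2, frzDet_smul, frzSgn_mul_self, one_mul]
    set r : ℤ := k % m with hr_def
    have hcase' : r ≤ (n : ℤ) + 1 := by omega
    rcases (by omega : r = 0 ∨ r = 1 ∨ (2 ≤ r ∧ r ≤ (n : ℤ))  ∨ r = (n : ℤ) + 1) with h | h | h | h
    · rw [h, frzBase_zero, show (0:ℤ)+1 = 1 by ring, frzBase_one]; simp [frzDet]
    · rw [h, frzBase_one, show (1:ℤ)+1 = 2 by ring, frzBase_mid n t 2 (by omega) (by omega)]
      simp [frzDet]
    · rw [frzBase_mid n t r h.1 (by omega), frzBase_mid n t (r + 1) (by omega) (by omega)]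
      simp only [frzDet]
      push_cast
      ring
    · rw [h, frzBase_mid n t ((n : ℤ) + 1) (by omega) le_rfl]
      have : (n : ℤ) + 1 + 1 = (n : ℤ) + 2 := by ring
      rw [this, frzBase_last]
      simp only [frzDet]
      have : ((n : ℤ) + 1 - ((n : ℤ) + 1) : ℤ) = 0 := by ring
      rw [this]
      push_cast
      field_simp
      ring
end FrzAux2

noncomputable section FrzAux3

lemma frzV_antiperiod (n : ℕ) (t : ℂ) (k : ℤ) :
    frzV n t (k + ((n : ℤ) + 3)) = - frzV n t k := by
  set m : ℤ := (n : ℤ) + 3 with hm_def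
  have hm : 0 < m := by omega
  have hr0 : 0 ≤ k % m := Int.emod_nonneg k (ne_of_gt hm)
  have hrm : k % m < m := Int.emod_lt_of_pos k hm
  have hk : k = k % m + (k / m) * m := by
    have h := Int.mul_ediv_add_emod k m
    have h2 := mul_comm m (k / m)
    linarith
  have hspec : (k + m) / m = k / m + 1 ∧ (k + m) % m = k % m :=
    div_mod_spec m (k / m + 1) (k % m) (k + m) hm (by linarith) hr0 hrm
  rw [frzV, frzV, hspec.1, hspec.2, frzSgn_succ, neg_smul]

lemma frzDet_self (a : ℂ × ℂ) : frzDet a a = 0 := by simp [frzDet]; ring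

lemma frzDet_neg_right (a b : ℂ × ℂ) : frzDet a (-b) = - frzDet a b := by
  simp [frzDet]; ring

lemma frzPlucker (a b c d : ℂ × ℂ) :
    frzDet a c * frzDet b d - frzDet a d * frzDet b c = frzDet a b * frzDet c d := by
  simp only [frzDet]; ring

lemma frzC_row2 (n : ℕ) (hn : 1 ≤ n) (t : ℂ) (ht : t ≠ 0) (i : ℤ) :
    frzC n t (i, i + (n : ℤ) + 2) = 1 := by
  have h : i + (n : ℤ) + 2 = (i - 1) + ((n : ℤ) + 3) := by ring
  rw [frzC]
  simp only [h]
  rw [frzV_antiperiod, frzDet_neg_right, frzDet_antisym]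
  have := frz_consec n hn t ht (i - 1)
  rw [show i - 1 + 1 = i by ring] at this
  rw [this]; ring

lemma frzC_row3 (n : ℕ) (t : ℂ) (i : ℤ) : frzC n t (i, i + (n : ℤ) + 3) = 0 := by
  have h : i + (n : ℤ) + 3 = i + ((n : ℤ) + 3) := by ring
  rw [frzC]
  simp only [h]
  rw [frzV_antiperiod, frzDet_neg_right, frzDet_self]; ring

lemma frzC_rule (n : ℕ) (hn : 1 ≤ n) (t : ℂ) (ht : t ≠ 0) (i j : ℤ) :
    frzC n t (i, j) * frzC n t (i + 1, j + 1) - frzC n t (i, j + 1) * frzC n t (i + 1, j) = 1 := by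
  simp only [frzC]
  rw [frzPlucker, frz_consec n hn t ht i, frz_consec n hn t ht j, one_mul]

lemma frzC_val (n : ℕ) (hn : 1 ≤ n) (t : ℂ) : frzC n t (0, (n : ℤ) + 1) = t := by
  set m : ℤ := (n : ℤ) + 3 with hm_def
  have hm : 0 < m := by omega
  have h0 : (0 : ℤ) / m = 0 ∧ (0 : ℤ) % m = 0 :=
    div_mod_spec m 0 0 0 hm (by ring) le_rfl hm
  have h1 : ((n : ℤ) + 1) / m = 0 ∧ ((n : ℤ) + 1) % m = (n : ℤ) + 1 :=
    div_mod_spec m 0 ((n : ℤ) + 1) ((n : ℤ) + 1) hm (by ring) (by omega) (by omega)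
  rw [frzC]
  simp only [frzV]
  rw [h0.1, h0.2, h1.1, h1.2, frzBase_zero, frzBase_mid n t ((n : ℤ) + 1) (by omega) le_rfl,
    frzDet_smul, frzSgn_mul_self, one_mul]
  simp [frzDet]

end FrzAux3

noncomputable section FrzAux4

lemma frz_neg_mem (R : Subring ℂ) (x : ℂ) (h : x ∈ (R : Set ℂ) \ {0}) :
    -x ∈ (R : Set ℂ) \ {0} := by
  refine ⟨neg_mem h.1, ?_⟩
  simp only [Set.mem_singleton_iff, neg_eq_zero]
  exact h.2

lemma frz_base_mem (R : Subring ℂ) (n : ℕ) (hn : 1 ≤ n) (t : ℂ)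
    (htR : t ∈ R) (h2t : 2 / t ∈ R)
    (hnz : ∀ k : ℤ, 0 ≤ k → k ≤ 2 * (n : ℤ) → t + (k : ℂ) ≠ 0)
    (a b : ℤ) (ha : 0 ≤ a) (hab : a + 2 ≤ b) (hb : b ≤ (n : ℤ) + 2)
    (hd : b ≤ a + (n : ℤ) + 1) :
    frzDet (frzBase n t a) (frzBase n t b) ∈ (R : Set ℂ) \ {0} := by
  have ht : t ≠ 0 := by
    have := hnz 0 le_rfl (by omega); simpa using this
  rcases (by omega : a = 0 ∨ a = 1 ∨ 2 ≤ a) with h | h | h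
  · -- a = 0, 2 ≤ b ≤ n+1
    subst h
    have hb1 : b ≤ (n : ℤ) + 1 := by omega
    rw [frzBase_zero, frzBase_mid n t b (by omega) hb1]
    have hval : frzDet (1, 0) (-1, t + (((n : ℤ) + 1 - b : ℤ) : ℂ))
        = t + (((n : ℤ) + 1 - b : ℤ) : ℂ) := by
      simp [frzDet]
    rw [hval]
    refine ⟨Subring.add_mem R htR (intCast_mem R _), ?_⟩
    simp only [Set.mem_singleton_iff]
    exact hnz ((n : ℤ) + 1 - b) (by omega) (by omega)
  · -- a = 1
    subst h
    rcases (by omega : b = (n : ℤ) + 2 ∨ b ≤ (n : ℤ) + 1) with hb2 | hb2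
    · subst hb2
      rw [frzBase_one, frzBase_last]
      have hval : frzDet (0, 1) (-(2 / t), 1) = 2 / t := by simp [frzDet]
      rw [hval]
      exact ⟨h2t, by simpa using div_ne_zero two_ne_zero ht⟩
    · rw [frzBase_one, frzBase_mid n t b (by omega) hb2]
      have hval : frzDet (0, 1) (-1, t + (((n : ℤ) + 1 - b : ℤ) : ℂ)) = 1 := by
        simp [frzDet]
      rw [hval]
      exact ⟨Subring.one_mem R, by simp⟩
  · -- 2 ≤ a
    rcases (by omega : b = (n : ℤ) + 2 ∨ b ≤ (n : ℤ) + 1) with hb2 | hb2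
    · subst hb2
      have han : a ≤ (n : ℤ) := by omega
      rw [frzBase_mid n t a h (by omega), frzBase_last]
      have hval : frzDet (-1, t + (((n : ℤ) + 1 - a : ℤ) : ℂ)) (-(2 / t), 1)
          = 1 + (((n : ℤ) + 1 - a : ℤ) : ℂ) * (2 / t) := by
        simp only [frzDet]
        field_simp
        ring
      rw [hval]
      refine ⟨Subring.add_mem R (Subring.one_mem R)
        (Subring.mul_mem R (intCast_mem R _) h2t), ?_⟩
      simp only [Set.mem_singleton_iff]
      have hval2 : 1 + (((n : ℤ) + 1 - a : ℤ) : ℂ) * (2 / t)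
          = (t + ((2 * ((n : ℤ) + 1 - a) : ℤ) : ℂ)) / t := by
        push_cast
        field_simp
      rw [hval2]
      exact div_ne_zero (hnz (2 * ((n : ℤ) + 1 - a)) (by omega) (by omega)) ht
    · rw [frzBase_mid n t a h (by omega), frzBase_mid n t b (by omega) hb2]
      have hval : frzDet (-1, t + (((n : ℤ) + 1 - a : ℤ) : ℂ))
          (-1, t + (((n : ℤ) + 1 - b : ℤ) : ℂ)) = ((b - a : ℤ) : ℂ) := by
        simp only [frzDet]
        push_cast
        ring
      rw [hval]
      refine ⟨intCast_mem R _, ?_⟩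
      simp only [Set.mem_singleton_iff, Int.cast_ne_zero]
      omega

end FrzAux4

noncomputable section FrzAux5

lemma frzC_band_mem (R : Subring ℂ) (n : ℕ) (hn : 1 ≤ n) (t : ℂ)
    (htR : t ∈ R) (h2t : 2 / t ∈ R)
    (hnz : ∀ k : ℤ, 0 ≤ k → k ≤ 2 * (n : ℤ) → t + (k : ℂ) ≠ 0)
    (i j : ℤ) (h1 : i + 2 ≤ j) (h2 : j ≤ i + (n : ℤ) + 1) :
    frzC n t (i, j) ∈ (R : Set ℂ) \ {0} := by
  set m : ℤ := (n : ℤ) + 3 with hm_def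
  have hm : 0 < m := by omega
  set a : ℤ := i % m with ha_def
  have ha0 : 0 ≤ a := Int.emod_nonneg i (ne_of_gt hm)
  have ham : a < m := Int.emod_lt_of_pos i hm
  have hi : i = a + (i / m) * m := by
    have h := Int.mul_ediv_add_emod i m
    have h' := mul_comm m (i / m)
    linarith
  set d : ℤ := j - i with hd_def
  have hjmod : j % m = (a + d) % m := by
    have hj : j = (a + d) + (i / m) * m := by omega
    rw [hj, Int.add_mul_emod_self_right]
  have hX : frzDet (frzBase n t a) (frzBase n t (j % m)) ∈ (R : Set ℂ) \ {0} := by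
    by_cases hc : a + d < m
    · have : j % m = a + d := by
        rw [hjmod, Int.emod_eq_of_lt (by omega) hc]
      rw [this]
      exact frz_base_mem R n hn t htR h2t hnz a (a + d) ha0 (by omega) (by omega) (by omega)
    · have hsub : (a + d - m) % m = (a + d) % m := by simp [Int.sub_emod]
      have hb0 : j % m = a + d - m := by
        rw [hjmod, ← hsub, Int.emod_eq_of_lt (by omega) (by omega)]
      rw [hb0, frzDet_antisym]
      exact frz_neg_mem R _
        (frz_base_mem R n hn t htR h2t hnz (a + d - m) a (by omega) (by omega) (by omega)
          (by omega))
  rw [frzC]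
  simp only [frzV]
  rw [frzDet_smul]
  rw [← ha_def] at *
  rcases frzSgn_cases (i / m) with hs1 | hs1 <;> rcases frzSgn_cases (j / m) with hs2 | hs2 <;>
    rw [hs1, hs2]
  · simpa using hX
  · have : (1 : ℂ) * -1 * frzDet (frzBase n t a) (frzBase n t (j % m))
        = -(frzDet (frzBase n t a) (frzBase n t (j % m))) := by ring
    rw [this]; exact frz_neg_mem R _ hX
  · have : (-1 : ℂ) * 1 * frzDet (frzBase n t a) (frzBase n t (j % m))
        = -(frzDet (frzBase n t a) (frzBase n t (j % m))) := by ring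
    rw [this]; exact frz_neg_mem R _ hX
  · have : (-1 : ℂ) * -1 * frzDet (frzBase n t a) (frzBase n t (j % m))
        = frzDet (frzBase n t a) (frzBase n t (j % m)) := by ring
    rw [this]; exact hX

lemma frzC_isFrieze (R : Subring ℂ) (n : ℕ) (hn : 1 ≤ n) (t : ℂ)
    (htR : t ∈ R) (h2t : 2 / t ∈ R)
    (hnz : ∀ k : ℤ, 0 ≤ k → k ≤ 2 * (n : ℤ) → t + (k : ℂ) ≠ 0) :
    IsFrieze n ((R : Set ℂ) \ {0}) (frzC n t) := by
  have ht : t ≠ 0 := by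
    have := hnz 0 le_rfl (by omega); simpa using this
  refine ⟨fun i => ?_, fun i => ?_, fun i => ?_, fun i => ?_, ?_, fun i j _ _ => ?_⟩
  · exact frzDet_self _
  · exact frz_consec n hn t ht i
  · exact frzC_row2 n hn t ht i
  · exact frzC_row3 n t i
  · exact fun i j hij hij' => frzC_band_mem R n hn t htR h2t hnz i j hij hij'
  · exact frzC_rule n hn t ht i j


/-- If the subring `R ⊆ ℂ` contains infinitely many divisors of `2`, then for each `n ≥ 1`
the set of restrictions to the band `B_n` of frieze patterns of height `n` over `R \ {0}`
is infinite. -/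
theorem stmt8 (R : Subring ℂ)
    (h2 : {t : ℂ | t ∈ R ∧ t ≠ 0 ∧ 2 / t ∈ R}.Infinite)
    (n : ℕ) (hn : 1 ≤ n) :
    {g : {p : ℤ × ℤ // p.1 ≤ p.2 ∧ p.2 ≤ p.1 + n + 3} → ℂ |
      ∃ c : ℤ × ℤ → ℂ, IsFrieze n ((R : Set ℂ) \ {0}) c ∧ ∀ p, g p = c p.1}.Infinite := by
  set S' : Set ℂ := {t : ℂ | t ∈ R ∧ t ≠ 0 ∧ 2 / t ∈ R} \
      ((fun k : ℤ => -(k : ℂ)) '' (Set.Icc (0 : ℤ) (2 * (n : ℤ)))) with hS'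
  have hS'inf : S'.Infinite := h2.diff ((Set.finite_Icc _ _).image _)
  have : Infinite ↥S' := hS'inf.to_subtype
  have hnz : ∀ t : ↥S', ∀ k : ℤ, 0 ≤ k → k ≤ 2 * (n : ℤ) → (t : ℂ) + (k : ℂ) ≠ 0 := by
    intro t k hk0 hk1 h
    exact t.2.2 ⟨k, Set.mem_Icc.mpr ⟨hk0, hk1⟩, (eq_neg_of_add_eq_zero_left h).symm⟩
  set F : ↥S' → ({p : ℤ × ℤ // p.1 ≤ p.2 ∧ p.2 ≤ p.1 + n + 3} → ℂ) :=
    fun t => fun p => frzC n (t : ℂ) p.1 with hF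
  have hinj : Function.Injective F := by
    intro t1 t2 h
    have hb : ((0 : ℤ), (n : ℤ) + 1).1 ≤ ((0 : ℤ), (n : ℤ) + 1).2 ∧
        ((0 : ℤ), (n : ℤ) + 1).2 ≤ ((0 : ℤ), (n : ℤ) + 1).1 + n + 3 := by
      constructor <;> simp <;> omega
    have h0 := congrFun h ⟨((0 : ℤ), (n : ℤ) + 1), hb⟩
    simp only [hF] at h0
    rw [frzC_val n hn, frzC_val n hn] at h0
    exact Subtype.ext h0
  have hmem : ∀ t : ↥S', F t ∈ {g : {p : ℤ × ℤ // p.1 ≤ p.2 ∧ p.2 ≤ p.1 + n + 3} → ℂ |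
      ∃ c : ℤ × ℤ → ℂ, IsFrieze n ((R : Set ℂ) \ {0}) c ∧ ∀ p, g p = c p.1} := by
    intro t
    exact ⟨frzC n (t : ℂ), frzC_isFrieze R n hn (t : ℂ) t.2.1.1 t.2.1.2.2 (hnz t),
      fun p => rfl⟩
  exact Set.infinite_of_injective_forall_mem hinj hmem
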